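/- Every infinite countable group G contains an increasing sequence of subsets A₁ ⊆ A₂ ⊆ A₃ ⊆ ⋯ such that Aₙ₊₁ is not Aₙ-bounded (Aₙ₊₁ ⊄ FAₙ for every finite F ⊆ G) for all n. -/
import Mathlib

open scoped Pointwise

def Bdd {G : Type*} [Group G] (A B : Set G) : Prop :=
  ∃ F : Finset G, A ⊆ (F : Set G) * B

section Aux

variable {G : Type*} [Group G]

/-- "Balls" w.r.t. an enumeration `e` of `G`. -/
noncomputable def ballE (e : ℕ → G) (m : ℕ) : Finset G :=
  haveI := Classical.decEq G
  (Finset.range (m + 1)).image e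

/-- Forbidden set at stage `j`, given previous values `f`. -/
def badSet (q : ℕ → ℕ × ℕ) (e : ℕ → G) (j : ℕ) (f : ℕ → G) : Set G :=
  {y | ∃ i < j, (∃ b ∈ ballE e (q j).2, y = b * f i) ∨ (∃ b ∈ ballE e (q i).2, f i = b * y)}

lemma badSet_finite (q : ℕ → ℕ × ℕ) (e : ℕ → G) (j : ℕ) (f : ℕ → G) :
    (badSet q e j f).Finite := by
  have : badSet q e j f ⊆ ⋃ i ∈ Set.Iio j,
      ((⋃ b ∈ ballE e (q j).2, ({b * f i} : Set G)) ∪ ⋃ b ∈ ballE e (q i).2, {b⁻¹ * f i}) := by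
    rintro y ⟨i, hij, h⟩
    refine Set.mem_biUnion hij ?_
    rcases h with ⟨b, hb, rfl⟩ | ⟨b, hb, hy⟩
    · exact Set.mem_union_left _ (Set.mem_biUnion hb rfl)
    · refine Set.mem_union_right _ (Set.mem_biUnion hb ?_)
      have : y = b⁻¹ * f i := by rw [hy]; group
      simp [this]
  exact Set.Finite.subset ((Set.finite_Iio j).biUnion fun i _ =>
    (((Finset.finite_toSet _).biUnion fun b _ => Set.finite_singleton _).union
      ((Finset.finite_toSet _).biUnion fun b _ => Set.finite_singleton _))) this

lemma badSet_congr (q : ℕ → ℕ × ℕ) (e : ℕ → G) (j : ℕ) {f g : ℕ → G}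
    (h : ∀ i < j, f i = g i) (y : G) : y ∈ badSet q e j f ↔ y ∈ badSet q e j g := by
  unfold badSet
  refine exists_congr fun i => and_congr_right fun hij => ?_
  rw [h i hij]

noncomputable def seqX [Infinite G] (q : ℕ → ℕ × ℕ) (e : ℕ → G) : ℕ → ℕ → G
  | 0 => fun _ => 1
  | j + 1 => Function.update (seqX q e j) j
      (Classical.choose ((badSet_finite q e j (seqX q e j)).infinite_compl.nonempty))

noncomputable def seqx [Infinite G] (q : ℕ → ℕ × ℕ) (e : ℕ → G) (j : ℕ) : G :=
  seqX q e (j + 1) j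

lemma seqX_eq [Infinite G] (q : ℕ → ℕ × ℕ) (e : ℕ → G) :
    ∀ k i, i < k → seqX q e k i = seqx q e i := by
  intro k
  induction k with
  | zero => omega
  | succ k ih =>
    intro i hi
    rcases Nat.lt_succ_iff_lt_or_eq.mp hi with h | rfl
    · have : seqX q e (k + 1) i = seqX q e k i := by
        show Function.update (seqX q e k) k _ i = _
        exact Function.update_of_ne (Nat.ne_of_lt h) _ _
      rw [this, ih i h]
    · rfl

lemma seqx_spec [Infinite G] (q : ℕ → ℕ × ℕ) (e : ℕ → G) (j : ℕ) :
    seqx q e j ∉ badSet q e j (seqx q e) := by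
  have h := Classical.choose_spec ((badSet_finite q e j (seqX q e j)).infinite_compl.nonempty)
  have e1 : seqx q e j = Classical.choose
      ((badSet_finite q e j (seqX q e j)).infinite_compl.nonempty) := by
    show Function.update (seqX q e j) j _ j = _
    exact Function.update_self _ _ _
  intro hmem
  rw [e1] at hmem
  exact h ((badSet_congr q e j (fun i hij => seqX_eq q e j i hij) _).2 hmem)

end Aux

theorem stmt13 {G : Type*} [Group G] [Countable G] [Infinite G] :
    ∃ A : ℕ → Set G, (∀ n, A n ⊆ A (n + 1)) ∧ ∀ n, ¬ Bdd (A (n + 1)) (A n) := by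
  obtain ⟨d⟩ := nonempty_denumerable G
  let eG : G ≃ ℕ := Denumerable.eqv G
  let e : ℕ → G := fun n => eG.symm n
  let qE : ℕ × ℕ ≃ ℕ := Denumerable.eqv (ℕ × ℕ)
  let q : ℕ → ℕ × ℕ := fun j => qE.symm j
  let x : ℕ → G := seqx q e
  refine ⟨fun n => {g | ∃ i, (q i).1 < n ∧ g = x i}, ?_, ?_⟩
  · rintro n g ⟨i, hi, rfl⟩
    exact ⟨i, hi.trans (Nat.lt_succ_self n), rfl⟩
  · rintro n ⟨F, hF⟩
    set m : ℕ := F.sup eG with hm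
    set j : ℕ := qE (n, m) with hj
    have hqj : q j = (n, m) := qE.symm_apply_apply _
    have hFm : ∀ b ∈ F, b ∈ ballE e m := by
      intro b hb
      classical
      unfold ballE
      refine Finset.mem_image.2 ⟨eG b, Finset.mem_range.2 ?_, eG.symm_apply_apply b⟩
      exact Nat.lt_succ_of_le (Finset.le_sup hb)
    have hxj : x j ∈ {g | ∃ i, (q i).1 < n + 1 ∧ g = x i} := by
      exact ⟨j, by rw [hqj]; exact Nat.lt_succ_self n, rfl⟩
    have h2 := hF hxj
    rw [Set.mem_mul] at h2
    obtain ⟨b, hb, a, ⟨i, hin, rfl⟩, hba⟩ := h2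
    have hbm : b ∈ ballE e (q j).2 := by rw [hqj]; exact hFm b hb
    rcases lt_trichotomy i j with h | rfl | h
    · exact seqx_spec q e j ⟨i, h, Or.inl ⟨b, hbm, hba.symm⟩⟩
    · rw [hqj] at hin; exact absurd hin (lt_irrefl n)
    · exact seqx_spec q e i ⟨j, h, Or.inr ⟨b, hbm, hba.symm⟩⟩
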